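/- Fix r_0 in (0, 1/2) and x_0 in T^2. There are only finitely many directions e in S^1 for which there exists a half-line in T^2 in direction e that does not intersect the ball B(x_0, r_0/8). -/

import Mathlib

lemma normT_le (y : ℝ) (N : ℤ) : ‖((y : ℝ) : AddCircle (1:ℝ))‖ ≤ |y - N| := by
  have h0 : (((N:ℝ)) : AddCircle (1:ℝ)) = 0 := by
    rw [AddCircle.coe_eq_zero_iff]; exact ⟨N, by simp⟩
  have h : ((y : ℝ) : AddCircle (1:ℝ)) = (((y - N) : ℝ) : AddCircle (1:ℝ)) := by
    rw [AddCircle.coe_sub, h0, sub_zero]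
  rw [h]
  simpa using QuotientAddGroup.norm_mk_le_norm (S := AddSubgroup.zmultiples (1:ℝ)) (m := y - (N:ℝ))

lemma step_hit (c d : ℝ) (hd : 0 < d) : ∃ k : ℕ, ∃ N : ℤ, |c + k * d - N| ≤ d := by
  refine ⟨⌈((⌈c⌉:ℝ) - c)/d⌉₊, ⌈c⌉, ?_⟩
  set k := ⌈((⌈c⌉:ℝ) - c)/d⌉₊ with hk
  have hc : c ≤ (⌈c⌉:ℝ) := Int.le_ceil c
  have h1 : ((⌈c⌉:ℝ) - c)/d ≤ k := Nat.le_ceil _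
  have h2 : (k:ℝ) < ((⌈c⌉:ℝ) - c)/d + 1 := Nat.ceil_lt_add_one (div_nonneg (by linarith) hd.le)
  rw [div_le_iff₀ hd] at h1
  rw [abs_le]
  constructor
  · nlinarith
  · nlinarith [mul_lt_mul_of_pos_right h2 hd, div_mul_cancel₀ ((⌈c⌉:ℝ) - c) hd.ne']

lemma step_hit' (c d : ℝ) (hd : d ≠ 0) : ∃ k : ℕ, ∃ N : ℤ, |c + k * d - N| ≤ |d| := by
  rcases lt_or_gt_of_ne hd with h | h
  · obtain ⟨k, N, hkN⟩ := step_hit (-c) (-d) (by linarith)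
    refine ⟨k, -N, ?_⟩
    rw [abs_of_neg h]
    rw [show c + k*d - ((-N:ℤ):ℝ) = -(-c + k*(-d) - N) by push_cast; ring, abs_neg]
    exact hkN
  · obtain ⟨k, N, hkN⟩ := step_hit c d h
    exact ⟨k, N, by rwa [abs_of_pos h]⟩

lemma orbit_dense (r : ℝ) (hr : 0 < r) (α : ℝ)
    (h : ∀ q : ℕ, 0 < q → q ≤ ⌈1/r⌉₊ → ¬ ∃ K : ℤ, (q:ℝ) * α = K)
    (c : ℝ) : ∃ n : ℕ, ‖((c + n * α : ℝ) : AddCircle (1:ℝ))‖ < r := by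
  set Q := ⌈1/r⌉₊ with hQdef
  have hQ0 : 0 < Q := Nat.ceil_pos.mpr (by positivity)
  have hQR : (0:ℝ) < Q := by exact_mod_cast hQ0
  have hQr : 1 / (Q:ℝ) ≤ r := by
    rw [div_le_iff₀ hQR]
    have h1 : 1/r ≤ (Q:ℝ) := Nat.le_ceil _
    rw [div_le_iff₀ hr] at h1
    linarith
  have hmaps : ∀ n ∈ Finset.range (Q+1),
      (⌊(Q:ℝ) * Int.fract ((n:ℝ) * α)⌋.toNat) ∈ Finset.range Q := by
    intro n _
    rw [Finset.mem_range]
    have h1 : (Q:ℝ) * Int.fract ((n:ℝ)*α) < Q := by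
      nlinarith [Int.fract_lt_one ((n:ℝ)*α), Int.fract_nonneg ((n:ℝ)*α)]
    have h2 : ⌊(Q:ℝ) * Int.fract ((n:ℝ)*α)⌋ < (Q:ℤ) :=
      Int.floor_lt.mpr (by exact_mod_cast h1)
    omega
  obtain ⟨n₁, hn₁, n₂, hn₂, hne, heq⟩ :=
    Finset.exists_ne_map_eq_of_card_lt_of_maps_to (by simp) hmaps
  have hfl : ∀ n : ℕ, (0:ℤ) ≤ ⌊(Q:ℝ) * Int.fract ((n:ℝ) * α)⌋ := fun n =>
    Int.floor_nonneg.mpr (mul_nonneg hQR.le (Int.fract_nonneg _))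
  obtain ⟨a, b, hab, hbQ, hfe⟩ : ∃ a b : ℕ, a < b ∧ b ≤ Q ∧
      ⌊(Q:ℝ) * Int.fract ((a:ℝ) * α)⌋ = ⌊(Q:ℝ) * Int.fract ((b:ℝ) * α)⌋ := by
    rw [Finset.mem_range, Nat.lt_succ_iff] at hn₁ hn₂
    rcases lt_or_gt_of_ne hne with h' | h'
    · exact ⟨n₁, n₂, h', hn₂, by have := hfl n₁; have := hfl n₂; omega⟩
    · exact ⟨n₂, n₁, h', hn₁, by have := hfl n₁; have := hfl n₂; omega⟩
  set m := b - a with hm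
  have hm0 : 0 < m := by omega
  have hmQ : m ≤ Q := by omega
  set d : ℝ := Int.fract ((b:ℝ)*α) - Int.fract ((a:ℝ)*α) with hd
  have hdlt : |d| < 1/(Q:ℝ) := by
    have h1 := Int.floor_le ((Q:ℝ) * Int.fract ((a:ℝ)*α))
    have h2 := Int.lt_floor_add_one ((Q:ℝ) * Int.fract ((a:ℝ)*α))
    have h3 := Int.floor_le ((Q:ℝ) * Int.fract ((b:ℝ)*α))
    have h4 := Int.lt_floor_add_one ((Q:ℝ) * Int.fract ((b:ℝ)*α))
    rw [hfe] at h1 h2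
    rw [abs_lt]
    constructor
    · rw [neg_lt, lt_div_iff₀ hQR, hd]
      nlinarith
    · rw [lt_div_iff₀ hQR, hd]
      nlinarith
  have hmca : ((m:ℕ):ℝ) = (b:ℝ) - a := by
    rw [hm]; push_cast [Nat.cast_sub hab.le]; ring
  have hmα : (m:ℝ)*α = d + ((⌊(b:ℝ)*α⌋ - ⌊(a:ℝ)*α⌋ : ℤ):ℝ) := by
    rw [hmca, hd]
    simp only [Int.fract]
    push_cast
    ring
  set K : ℤ := ⌊(b:ℝ)*α⌋ - ⌊(a:ℝ)*α⌋ with hK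
  have hd0 : d ≠ 0 := by
    intro h0
    exact h m hm0 hmQ ⟨K, by rw [hmα, h0, zero_add]⟩
  obtain ⟨k, N, hkN⟩ := step_hit' c d hd0
  refine ⟨k * m, ?_⟩
  have key : c + ((k*m : ℕ):ℝ)*α - ((N + k*K : ℤ):ℝ) = c + k*d - N := by
    push_cast
    rw [mul_assoc, hmα]
    push_cast
    ring
  calc ‖((c + ((k*m:ℕ):ℝ) * α : ℝ) : AddCircle (1:ℝ))‖
      ≤ |c + ((k*m:ℕ):ℝ)*α - ((N + k*K : ℤ):ℝ)| := normT_le _ _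
    _ = |c + k*d - N| := by rw [key]
    _ ≤ |d| := hkN
    _ < 1/(Q:ℝ) := hdlt
    _ ≤ r := hQr

lemma aux2 (r : ℝ) (hr : 0 < r) (e₁ e₂ x₁ x₂ a b : ℝ)
    (he : e₁^2 + e₂^2 = 1) (h21 : |e₂| ≤ |e₁|)
    (hbad : ∀ t : ℝ, 0 ≤ t → ¬ (‖((x₁ + t*e₁ - a : ℝ) : AddCircle (1:ℝ))‖ < r ∧
        ‖((x₂ + t*e₂ - b : ℝ) : AddCircle (1:ℝ))‖ < r)) :
    ∃ p q : ℤ, 0 < q ∧ q ≤ (⌈1/r⌉₊:ℤ) ∧ |p| ≤ q ∧ (q:ℝ) * e₂ = (p:ℝ) * |e₁| := by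
  have he₁ : e₁ ≠ 0 := by
    intro h0
    rw [h0, abs_zero, abs_nonpos_iff] at h21
    rw [h0, h21] at he
    norm_num at he
  have habs : (0:ℝ) < |e₁| := abs_pos.mpr he₁
  by_contra hcon
  push_neg at hcon
  set α := e₂ / |e₁| with hα
  have hα1 : |α| ≤ 1 := by
    rw [hα, abs_div, abs_abs]
    exact div_le_one_of_le₀ h21 habs.le
  have hkey : ∀ q : ℕ, 0 < q → q ≤ ⌈1/r⌉₊ → ¬ ∃ K : ℤ, (q:ℝ) * α = K := by
    rintro q hq hqQ ⟨K, hKe⟩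
    have hq' : (0:ℤ) < (q:ℤ) := by exact_mod_cast hq
    have hqQ' : (q:ℤ) ≤ (⌈1/r⌉₊:ℤ) := by exact_mod_cast hqQ
    have hrel : ((q:ℤ):ℝ) * e₂ = (K:ℝ) * |e₁| := by
      have := hKe
      rw [hα] at this
      field_simp at this
      push_cast
      linarith [this]
    have hKq : |K| ≤ (q:ℤ) := by
      have : |(K:ℝ)| ≤ (q:ℝ) := by
        rw [← hKe, abs_mul, Nat.abs_cast]
        calc (q:ℝ) * |α| ≤ (q:ℝ) * 1 := by
              exact mul_le_mul_of_nonneg_left hα1 (by positivity)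
          _ = q := mul_one _
      exact_mod_cast (by rwa [← Int.cast_abs] at this : ((|K|:ℤ):ℝ) ≤ ((q:ℤ):ℝ))
    exact absurd hrel (hcon K q hq' hqQ' hKq)
  set u := (a - x₁)/e₁ with hu
  set n₀ := ⌈-u * |e₁|⌉₊ with hn₀
  obtain ⟨k, hk⟩ := orbit_dense r hr α hkey (x₂ + u*e₂ - b + n₀*α)
  set n := n₀ + k with hn
  set t := u + (n:ℝ)/|e₁| with ht
  have htpos : 0 ≤ t := by
    have h1 : -u * |e₁| ≤ (n₀:ℝ) := Nat.le_ceil _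
    have h2 : (n₀:ℝ) ≤ (n:ℝ) := by exact_mod_cast Nat.le_add_right n₀ k
    have h3 : -u ≤ (n:ℝ)/|e₁| := by
      rw [le_div_iff₀ habs]
      linarith
    rw [ht]
    linarith
  refine hbad t htpos ⟨?_, ?_⟩
  · have hue : u * e₁ = a - x₁ := div_mul_cancel₀ _ he₁
    rcases le_or_gt 0 e₁ with hs | hs
    · have : x₁ + t*e₁ - a = ((n:ℤ):ℝ) := by
        rw [ht, abs_of_nonneg hs]
        field_simp
        push_cast
        linarith [hue]
      rw [this]
      have hz : ((((n:ℕ):ℤ):ℝ) : AddCircle (1:ℝ)) = 0 := by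
        rw [AddCircle.coe_eq_zero_iff]; exact ⟨(n:ℤ), by simp⟩
      rw [hz, norm_zero]
      exact hr
    · have hdiv : ((n:ℝ)/(-e₁)) * e₁ = -(n:ℝ) := by
        rw [div_neg, neg_mul, div_mul_cancel₀ _ he₁]
      have : x₁ + t*e₁ - a = (((-(n:ℤ)):ℤ):ℝ) := by
        rw [ht, abs_of_neg hs]
        push_cast
        linear_combination hue + hdiv
      rw [this]
      have hz : ((((-(n:ℤ)):ℤ):ℝ) : AddCircle (1:ℝ)) = 0 := by
        rw [AddCircle.coe_eq_zero_iff]; exact ⟨-(n:ℤ), by simp⟩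
      rw [hz, norm_zero]
      exact hr
  · have hexp : x₂ + t*e₂ - b = (x₂ + u*e₂ - b + n₀*α) + k*α := by
      rw [ht, hα, hn]
      push_cast
      field_simp
      ring
    rw [hexp]
    exact hk

lemma reconstruct (p q : ℤ) (hq : 0 < q) (e₁ e₂ : ℝ) (he : e₁^2 + e₂^2 = 1)
    (hrel : (q:ℝ) * e₂ = (p:ℝ) * |e₁|) :
    |e₁| = (q:ℝ)/Real.sqrt ((p:ℝ)^2+(q:ℝ)^2) ∧
    e₂ = (p:ℝ)/Real.sqrt ((p:ℝ)^2+(q:ℝ)^2) := by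
  have hqR : (0:ℝ) < q := by exact_mod_cast hq
  have hpq : (0:ℝ) < (p:ℝ)^2+(q:ℝ)^2 := by positivity
  set w := Real.sqrt ((p:ℝ)^2+(q:ℝ)^2) with hwdef
  have hw : 0 < w := Real.sqrt_pos.mpr hpq
  have hw2 : w^2 = (p:ℝ)^2+(q:ℝ)^2 := Real.sq_sqrt hpq.le
  have h2 : (q:ℝ)^2 * e₂^2 = (p:ℝ)^2 * e₁^2 := by
    have := congrArg (·^2) hrel
    simpa [mul_pow, sq_abs] using this
  have h1 : e₁^2 * ((p:ℝ)^2+(q:ℝ)^2) = (q:ℝ)^2 := by nlinarith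
  have habs : |e₁| = (q:ℝ)/w := by
    have hsq : ((q:ℝ)/w)^2 = e₁^2 := by
      rw [div_pow, hw2]
      field_simp
      linarith
    calc |e₁| = Real.sqrt (e₁^2) := (Real.sqrt_sq_eq_abs e₁).symm
      _ = Real.sqrt (((q:ℝ)/w)^2) := by rw [hsq]
      _ = |(q:ℝ)/w| := Real.sqrt_sq_eq_abs _
      _ = (q:ℝ)/w := abs_of_pos (by positivity)
  refine ⟨habs, ?_⟩
  have : (q:ℝ) * e₂ = (q:ℝ) * ((p:ℝ)/w) := by
    rw [hrel, habs]
    field_simp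
  exact mul_left_cancel₀ hqR.ne' this

lemma memS {Q p q : ℤ} (h1 : -Q ≤ p) (h2 : p ≤ Q) (h3 : -Q ≤ q) (h4 : q ≤ Q) (s : Bool) :
    ((p, q), s) ∈ (Set.Icc (-Q) Q ×ˢ Set.Icc (-Q) Q) ×ˢ (Set.univ : Set Bool) :=
  ⟨⟨Set.mem_Icc.mpr ⟨h1, h2⟩, Set.mem_Icc.mpr ⟨h3, h4⟩⟩, Set.mem_univ _⟩

noncomputable def fdir : (ℤ × ℤ) × Bool → ℝ × ℝ
  | ((p, q), true) => ((q:ℝ)/Real.sqrt ((p:ℝ)^2+(q:ℝ)^2), (p:ℝ)/Real.sqrt ((p:ℝ)^2+(q:ℝ)^2))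
  | ((p, q), false) => ((p:ℝ)/Real.sqrt ((p:ℝ)^2+(q:ℝ)^2), (q:ℝ)/Real.sqrt ((p:ℝ)^2+(q:ℝ)^2))

/-- The two-dimensional torus `ℝ²/ℤ²`. -/
abbrev Torus2 : Type := AddCircle (1 : ℝ) × AddCircle (1 : ℝ)

/-- The canonical surjection `s : ℝ² → T²`. -/
noncomputable def torusProj (x : ℝ × ℝ) : Torus2 := ((x.1 : AddCircle (1 : ℝ)), (x.2 : AddCircle (1 : ℝ)))

/-- There are only finitely many unit directions `e` for which some half-line of `T²`
in direction `e` avoids the ball `B(x₀, r₀/8)`. -/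
theorem statement4 (x₀ : Torus2) (r₀ : ℝ) (hr₀ : 0 < r₀) (hr₀' : r₀ < 1 / 2) :
    {e : ℝ × ℝ | e.1 ^ 2 + e.2 ^ 2 = 1 ∧
      ∃ x : Torus2, ∀ t : ℝ, 0 ≤ t →
        x + torusProj (t • e) ∉ Metric.ball x₀ (r₀ / 8)}.Finite := by
  set r : ℝ := r₀ / 8 with hrdef
  have hr : 0 < r := by positivity
  set Q : ℤ := (⌈1/r⌉₊ : ℤ) with hQdef
  set S : Set ((ℤ × ℤ) × Bool) := (Set.Icc (-Q) Q ×ˢ Set.Icc (-Q) Q) ×ˢ Set.univ with hS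
  have hSfin : S.Finite :=
    ((Set.finite_Icc _ _).prod (Set.finite_Icc _ _)).prod Set.finite_univ
  refine Set.Finite.subset (hSfin.image fdir) ?_
  obtain ⟨y₁, y₂⟩ := x₀
  rintro ⟨e₁, e₂⟩ ⟨he, ⟨u, v⟩, hx⟩
  obtain ⟨x₁, hx₁⟩ := QuotientAddGroup.mk_surjective u
  obtain ⟨x₂, hx₂⟩ := QuotientAddGroup.mk_surjective v
  obtain ⟨a, ha⟩ := QuotientAddGroup.mk_surjective y₁
  obtain ⟨b, hb⟩ := QuotientAddGroup.mk_surjective y₂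
  have hbad : ∀ t : ℝ, 0 ≤ t → ¬ (‖((x₁ + t*e₁ - a : ℝ) : AddCircle (1:ℝ))‖ < r ∧
      ‖((x₂ + t*e₂ - b : ℝ) : AddCircle (1:ℝ))‖ < r) := by
    rintro t ht ⟨h1, h2⟩
    apply hx t ht
    have hxt : (u, v) + torusProj (t • (e₁, e₂)) =
        (((x₁ + t*e₁ : ℝ) : AddCircle (1:ℝ)), ((x₂ + t*e₂ : ℝ) : AddCircle (1:ℝ))) := by
      rw [← hx₁, ← hx₂]
      simp only [torusProj, Prod.smul_fst, Prod.smul_snd, smul_eq_mul, Prod.mk_add_mk,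
        AddCircle.coe_add]
    rw [hxt, ← ha, ← hb, Metric.mem_ball, Prod.dist_eq]
    rw [max_lt_iff]
    constructor
    · show dist ((x₁ + t*e₁ : ℝ) : AddCircle (1:ℝ)) ((a:ℝ) : AddCircle (1:ℝ)) < r₀ / 8
      rw [dist_eq_norm, ← AddCircle.coe_sub]
      exact h1
    · show dist ((x₂ + t*e₂ : ℝ) : AddCircle (1:ℝ)) ((b:ℝ) : AddCircle (1:ℝ)) < r₀ / 8
      rw [dist_eq_norm, ← AddCircle.coe_sub]
      exact h2
  rcases le_total |e₂| |e₁| with hcase | hcase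
  · obtain ⟨p, q, hq, hqQ, hpq, hrel⟩ := aux2 r hr e₁ e₂ x₁ x₂ a b he hcase hbad
    obtain ⟨habs, he₂⟩ := reconstruct p q hq e₁ e₂ he hrel
    have hpb := abs_le.mp hpq
    rcases le_or_gt 0 e₁ with hs | hs
    · refine ⟨((p, q), true), memS (by omega) (by omega) (by omega) (by omega) _, ?_⟩
      simp only [fdir, Prod.mk.injEq]
      exact ⟨by rw [← abs_of_nonneg hs, habs], he₂.symm⟩
    · refine ⟨((p, -q), true), memS (by omega) (by omega) (by omega) (by omega) _, ?_⟩
      simp only [fdir, Prod.mk.injEq]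
      have hww : Real.sqrt ((p:ℝ)^2 + ((-q:ℤ):ℝ)^2) = Real.sqrt ((p:ℝ)^2 + (q:ℝ)^2) := by
        push_cast
        rw [neg_sq]
      rw [hww]
      constructor
      · push_cast
        rw [neg_div]
        rw [← habs, abs_of_neg hs, neg_neg]
      · exact he₂.symm
  · have he' : e₂^2 + e₁^2 = 1 := by linarith
    have hbad' : ∀ t : ℝ, 0 ≤ t → ¬ (‖((x₂ + t*e₂ - b : ℝ) : AddCircle (1:ℝ))‖ < r ∧
        ‖((x₁ + t*e₁ - a : ℝ) : AddCircle (1:ℝ))‖ < r) := by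
      rintro t ht ⟨h2, h1⟩
      exact hbad t ht ⟨h1, h2⟩
    obtain ⟨p, q, hq, hqQ, hpq, hrel⟩ := aux2 r hr e₂ e₁ x₂ x₁ b a he' hcase hbad'
    obtain ⟨habs, he₁⟩ := reconstruct p q hq e₂ e₁ he' hrel
    have hpb := abs_le.mp hpq
    rcases le_or_gt 0 e₂ with hs | hs
    · refine ⟨((p, q), false), memS (by omega) (by omega) (by omega) (by omega) _, ?_⟩
      simp only [fdir, Prod.mk.injEq]
      exact ⟨he₁.symm, by rw [← abs_of_nonneg hs, habs]⟩
    · refine ⟨((p, -q), false), memS (by omega) (by omega) (by omega) (by omega) _, ?_⟩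
      simp only [fdir, Prod.mk.injEq]
      have hww : Real.sqrt ((p:ℝ)^2 + ((-q:ℤ):ℝ)^2) = Real.sqrt ((p:ℝ)^2 + (q:ℝ)^2) := by
        push_cast
        rw [neg_sq]
      rw [hww]
      constructor
      · exact he₁.symm
      · push_cast
        rw [neg_div]
        rw [← habs, abs_of_neg hs, neg_neg]
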